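/- Let λ > 0, c ∈ ℝ^k, and Q ∈ ℝ^{k×k} symmetric positive semidefinite. A point x in the probability simplex Δ ⊆ ℝ^k minimizes y ↦ (c + ½Qy)ᵀ y + λ yᵀ ln(y) over Δ if and only if x = softmax(−(c + Qx)/λ), where softmax(z) = exp(z)/(1ᵀ exp(z)). -/

import Mathlib

open Finset

def simplex (k : ℕ) : Set (Fin k → ℝ) :=
  {y | ∑ i, y i = 1 ∧ ∀ i, 0 ≤ y i}

noncomputable def softmax {k : ℕ} (z : Fin k → ℝ) : Fin k → ℝ :=
  fun i => Real.exp (z i) / ∑ j, Real.exp (z j)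

/-- The entropy-regularized quadratic objective `(c + ½Qy)ᵀy + λ yᵀ ln y`. -/
noncomputable def obj {k : ℕ} (c : Fin k → ℝ) (Q : Matrix (Fin k) (Fin k) ℝ)
    (lam : ℝ) (y : Fin k → ℝ) : ℝ :=
  (∑ i, (c i + (1 / 2) * Q.mulVec y i) * y i) + lam * ∑ i, y i * Real.log (y i)

/-- Tangent line inequality for `y ↦ y log y` at a point `x > 0`. -/
lemma ent_tangent (x y : ℝ) (hx : 0 < x) (hy : 0 ≤ y) :
    y + y * Real.log x ≤ x + y * Real.log y := by
  rcases eq_or_lt_of_le hy with h | h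
  · simp [← h]; positivity
  · have h1 : Real.log (x / y) ≤ x / y - 1 := Real.log_le_sub_one_of_pos (by positivity)
    have h2 : Real.log (x / y) = Real.log x - Real.log y := Real.log_div hx.ne' h.ne'
    rw [h2] at h1
    have := mul_le_mul_of_nonneg_left h1 h.le
    have hxy : y * (x / y) = x := by field_simp
    nlinarith

lemma gibbs_le (s x : ℝ) (hs : 0 < s) (hx : 0 ≤ x) :
    x * Real.log s - x * Real.log x ≤ s - x := by
  have := ent_tangent s x hs hx
  linarith

lemma gibbs_lt (s x : ℝ) (hs : 0 < s) (hx : 0 ≤ x) (hne : x ≠ s) :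
    x * Real.log s - x * Real.log x < s - x := by
  rcases eq_or_lt_of_le hx with h | h
  · simp [← h]; linarith
  · have hne1 : s / x ≠ 1 := by
      intro h1; apply hne; field_simp at h1; linarith
    have h1 : Real.log (s / x) < s / x - 1 := Real.log_lt_sub_one_of_pos (by positivity) hne1
    have h2 : Real.log (s / x) = Real.log s - Real.log x := Real.log_div hs.ne' h.ne'
    rw [h2] at h1
    have := mul_lt_mul_of_pos_left h1 h
    have hxy : x * (s / x) = s := by field_simp
    nlinarith

lemma qswap {k : ℕ} (Q : Matrix (Fin k) (Fin k) ℝ) (hs : ∀ i j, Q i j = Q j i)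
    (u v : Fin k → ℝ) :
    ∑ i, Q.mulVec u i * v i = ∑ i, Q.mulVec v i * u i := by
  simp only [Matrix.mulVec, dotProduct, Finset.sum_mul]
  rw [Finset.sum_comm]
  refine Finset.sum_congr rfl fun i _ => Finset.sum_congr rfl fun j _ => ?_
  rw [hs j i]; ring

lemma mulVec_comb {k : ℕ} (Q : Matrix (Fin k) (Fin k) ℝ) (a b : ℝ) (u v : Fin k → ℝ) (i : Fin k) :
    Q.mulVec (fun j => a * u j + b * v j) i = a * Q.mulVec u i + b * Q.mulVec v i := by
  simp only [Matrix.mulVec, dotProduct, mul_add, Finset.sum_add_distrib, Finset.mul_sum]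
  congr 1
  · exact Finset.sum_congr rfl fun j _ => by ring
  · exact Finset.sum_congr rfl fun j _ => by ring

lemma qf_nonneg {k : ℕ} (Q : Matrix (Fin k) (Fin k) ℝ) (hQ : Q.PosSemidef) (v : Fin k → ℝ) :
    0 ≤ ∑ i, Q.mulVec v i * v i := by
  have := hQ.dotProduct_mulVec_nonneg v
  simpa [dotProduct, mul_comm] using this

lemma qf_sub_nonneg {k : ℕ} (Q : Matrix (Fin k) (Fin k) ℝ) (hQ : Q.PosSemidef)
    (hs : ∀ i j, Q i j = Q j i) (x y : Fin k → ℝ) :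
    0 ≤ ∑ i, Q.mulVec x i * x i - 2 * ∑ i, Q.mulVec x i * y i + ∑ i, Q.mulVec y i * y i := by
  have h0 := qf_nonneg Q hQ (fun j => (1:ℝ) * x j + (-1) * y j)
  have h1 : ∑ i, Q.mulVec (fun j => (1:ℝ) * x j + (-1) * y j) i * ((fun j => (1:ℝ) * x j + (-1) * y j) i)
      = ∑ i, Q.mulVec x i * x i - 2 * ∑ i, Q.mulVec x i * y i + ∑ i, Q.mulVec y i * y i := by
    have e : ∀ i, Q.mulVec (fun j => (1:ℝ) * x j + (-1) * y j) i * ((fun j => (1:ℝ) * x j + (-1) * y j) i)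
        = Q.mulVec x i * x i - (Q.mulVec x i * y i) - (Q.mulVec y i * x i) + Q.mulVec y i * y i := by
      intro i
      show Q.mulVec (fun j => (1:ℝ) * x j + (-1) * y j) i * ((1:ℝ) * x i + (-1) * y i) = _
      rw [mulVec_comb]; ring
    rw [Finset.sum_congr rfl fun i _ => e i]
    simp only [Finset.sum_add_distrib, Finset.sum_sub_distrib]
    rw [qswap Q hs y x]
    ring
  rw [h1] at h0
  exact h0

lemma qf_comb {k : ℕ} (Q : Matrix (Fin k) (Fin k) ℝ) (hs : ∀ i j, Q i j = Q j i)
    (x y : Fin k → ℝ) (t : ℝ) :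
    ∑ i, Q.mulVec (fun j => (1 - t) * x j + t * y j) i * ((1 - t) * x i + t * y i)
      = ∑ i, Q.mulVec x i * x i + 2 * t * ((∑ i, Q.mulVec x i * y i) - ∑ i, Q.mulVec x i * x i)
        + t ^ 2 * (∑ i, Q.mulVec x i * x i - 2 * ∑ i, Q.mulVec x i * y i
              + ∑ i, Q.mulVec y i * y i) := by
  have e : ∀ i, Q.mulVec (fun j => (1 - t) * x j + t * y j) i * ((1 - t) * x i + t * y i)
      = (1 - t)^2 * (Q.mulVec x i * x i) + ((1-t)*t) * (Q.mulVec x i * y i)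
        + (t*(1-t)) * (Q.mulVec y i * x i) + t^2 * (Q.mulVec y i * y i) := by
    intro i
    rw [mulVec_comb]; ring
  rw [Finset.sum_congr rfl fun i _ => e i]
  simp only [Finset.sum_add_distrib, ← Finset.mul_sum]
  rw [qswap Q hs y x]
  ring

lemma pick_t (A B : ℝ) (hA : A < 0) (hB : 0 ≤ B) :
    ∃ t : ℝ, 0 ≤ t ∧ t ≤ 1 ∧ t * A + t ^ 2 * (B / 2) < 0 := by
  have hD : 0 < B - A := by linarith
  refine ⟨-A / (B - A), div_nonneg (by linarith) hD.le, ?_, ?_⟩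
  · rw [div_le_one hD]; linarith
  · have key : (-A / (B - A)) * A + (-A / (B - A)) ^ 2 * (B / 2)
        = A ^ 2 * (2 * A - B) / (2 * (B - A) ^ 2) := by
      field_simp
      ring
    rw [key]
    apply div_neg_of_neg_of_pos
    · have hA2 : 0 < A ^ 2 := by nlinarith
      nlinarith
    · have h2 : (0:ℝ) < (B - A) ^ 2 := pow_pos hD 2
      linarith

lemma obj_eq {k : ℕ} (c : Fin k → ℝ) (Q : Matrix (Fin k) (Fin k) ℝ) (lam : ℝ) (y : Fin k → ℝ) :
    obj c Q lam y = (∑ i, c i * y i) + (1 / 2) * (∑ i, Q.mulVec y i * y i)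
      + lam * ∑ i, y i * Real.log (y i) := by
  unfold obj
  rw [Finset.sum_congr rfl (fun i _ => show (c i + (1/2) * Q.mulVec y i) * y i
    = c i * y i + (1/2) * (Q.mulVec y i * y i) from by ring)]
  rw [Finset.sum_add_distrib, ← Finset.mul_sum]

theorem stmt1 {k : ℕ} (c : Fin k → ℝ) (Q : Matrix (Fin k) (Fin k) ℝ)
    (hQ : Q.PosSemidef) (lam : ℝ) (hlam : 0 < lam)
    (x : Fin k → ℝ) (hx : x ∈ simplex k) :
    (∀ y ∈ simplex k, obj c Q lam x ≤ obj c Q lam y) ↔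
      x = softmax (fun i => -(c i + Q.mulVec x i) / lam) := by
  obtain ⟨hsum, hposx⟩ := hx
  by_cases hk : k = 0
  · subst hk; simp at hsum
  have hnem : Nonempty (Fin k) := ⟨⟨0, Nat.pos_of_ne_zero hk⟩⟩
  set z : Fin k → ℝ := fun i => -(c i + Q.mulVec x i) / lam with hzdef
  set s : Fin k → ℝ := softmax z with hsdef
  have hS : (0:ℝ) < ∑ j, Real.exp (z j) :=
    Finset.sum_pos (fun j _ => Real.exp_pos _) Finset.univ_nonempty
  have hspos : ∀ i, 0 < s i := by
    intro i; rw [hsdef]; unfold softmax; positivity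
  have hssum : ∑ i, s i = 1 := by
    rw [hsdef]; unfold softmax; rw [← Finset.sum_div, div_self hS.ne']
  have hlogs : ∀ i, Real.log (s i) = z i - Real.log (∑ j, Real.exp (z j)) := by
    intro i; rw [hsdef]; unfold softmax
    rw [Real.log_div (Real.exp_pos _).ne' hS.ne', Real.log_exp]
  have hcQ : ∀ i, c i + Q.mulVec x i
      = -lam * (Real.log (s i) + Real.log (∑ j, Real.exp (z j))) := by
    intro i
    rw [hlogs i]
    have hz : z i = -(c i + Q.mulVec x i) / lam := by rw [hzdef]
    rw [hz]
    field_simp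
    ring
  have hQsym : ∀ i j, Q i j = Q j i := by
    intro i j
    have := congrFun (congrFun hQ.1 i) j
    simpa [Matrix.conjTranspose_apply] using this.symm
  have hsx0 : ∑ i, (s i - x i) = 0 := by
    rw [Finset.sum_sub_distrib, hssum, hsum]; ring
  constructor
  · -- minimizer ⇒ fixed point
    intro hmin
    by_contra hxs
    -- strict Gibbs: A < 0
    have hA : (∑ i, (x i * Real.log (s i) - x i * Real.log (x i))) < 0 := by
      have hlt : (∑ i, (x i * Real.log (s i) - x i * Real.log (x i))) < ∑ i, (s i - x i) := by
        apply Finset.sum_lt_sum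
        · intro i _; exact gibbs_le _ _ (hspos i) (hposx i)
        · obtain ⟨i, hi⟩ := Function.ne_iff.mp hxs
          exact ⟨i, Finset.mem_univ i, gibbs_lt _ _ (hspos i) (hposx i) hi⟩
      rw [hsx0] at hlt; exact hlt
    have hA' : lam * (∑ i, (x i * Real.log (s i) - x i * Real.log (x i))) < 0 :=
      mul_neg_of_pos_of_neg hlam hA
    have hB : 0 ≤ ∑ i, Q.mulVec x i * x i - 2 * ∑ i, Q.mulVec x i * s i
        + ∑ i, Q.mulVec s i * s i := qf_sub_nonneg Q hQ hQsym x s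
    obtain ⟨t, ht0, ht1, hquad⟩ := pick_t _ _ hA' hB
    -- the competitor point
    set y : Fin k → ℝ := fun i => (1 - t) * x i + t * s i with hydef
    have hy : y ∈ simplex k := by
      constructor
      · rw [hydef]
        simp only [Finset.sum_add_distrib, ← Finset.mul_sum, hsum, hssum]
        ring
      · intro i
        rw [hydef]
        have := hposx i; have := (hspos i).le
        have h1t : 0 ≤ 1 - t := by linarith
        positivity
    have hmy := hmin y hy
    -- upper bound on obj y
    rw [obj_eq c Q lam x, obj_eq c Q lam y] at hmy
    have f1 : ∑ i, c i * y i
        = ∑ i, c i * x i + t * ((∑ i, c i * s i) - ∑ i, c i * x i) := by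
      rw [hydef]
      rw [Finset.sum_congr rfl (fun i _ => show c i * ((1 - t) * x i + t * s i)
        = (1 - t) * (c i * x i) + t * (c i * s i) from by ring)]
      simp only [Finset.sum_add_distrib, ← Finset.mul_sum]
      ring
    have f2 : ∑ i, Q.mulVec y i * y i
        = ∑ i, Q.mulVec x i * x i + 2 * t * ((∑ i, Q.mulVec x i * s i) - ∑ i, Q.mulVec x i * x i)
          + t ^ 2 * (∑ i, Q.mulVec x i * x i - 2 * ∑ i, Q.mulVec x i * s i
              + ∑ i, Q.mulVec s i * s i) := by
      rw [hydef]
      exact qf_comb Q hQsym x s t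
    have f3 : ∑ i, y i * Real.log (y i)
        ≤ (1 - t) * ∑ i, x i * Real.log (x i) + t * ∑ i, s i * Real.log (s i) := by
      rw [hydef]
      simp only [Finset.mul_sum]
      rw [← Finset.sum_add_distrib]
      apply Finset.sum_le_sum
      intro i _
      have hconv := Real.convexOn_mul_log.2 (Set.mem_Ici.2 (hposx i))
        (Set.mem_Ici.2 (hspos i).le) (by linarith : (0:ℝ) ≤ 1 - t) ht0
        (by ring : (1 - t) + t = 1)
      simpa using hconv
    have f3' := mul_le_mul_of_nonneg_left f3 hlam.le
    -- linear coefficient identity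
    have e1 : ∑ i, (c i + Q.mulVec x i) * (s i - x i)
        = -lam * ∑ i, Real.log (s i) * (s i - x i) := by
      rw [Finset.sum_congr rfl (fun i _ => by rw [hcQ i])]
      rw [Finset.sum_congr rfl (fun i _ =>
        show -lam * (Real.log (s i) + Real.log (∑ j, Real.exp (z j))) * (s i - x i)
          = -lam * (Real.log (s i) * (s i - x i))
            + (-lam * Real.log (∑ j, Real.exp (z j))) * (s i - x i) from by ring)]
      rw [Finset.sum_add_distrib, ← Finset.mul_sum, ← Finset.mul_sum, hsx0]
      ring
    have sp1 : ∑ i, (c i + Q.mulVec x i) * (s i - x i)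
        = ((∑ i, c i * s i) - ∑ i, c i * x i)
          + ((∑ i, Q.mulVec x i * s i) - ∑ i, Q.mulVec x i * x i) := by
      rw [Finset.sum_congr rfl (fun i _ => show (c i + Q.mulVec x i) * (s i - x i)
        = (c i * s i - c i * x i) + (Q.mulVec x i * s i - Q.mulVec x i * x i) from by ring)]
      simp only [Finset.sum_add_distrib, Finset.sum_sub_distrib]
    have sp2 : ∑ i, Real.log (s i) * (s i - x i)
        = (∑ i, s i * Real.log (s i)) - ∑ i, x i * Real.log (s i) := by
      rw [Finset.sum_congr rfl (fun i _ => show Real.log (s i) * (s i - x i)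
        = s i * Real.log (s i) - x i * Real.log (s i) from by ring)]
      simp only [Finset.sum_sub_distrib]
    have sp3 : ∑ i, (x i * Real.log (s i) - x i * Real.log (x i))
        = (∑ i, x i * Real.log (s i)) - ∑ i, x i * Real.log (x i) := by
      simp only [Finset.sum_sub_distrib]
    -- combine: f4
    have f4 : ((∑ i, c i * s i) - ∑ i, c i * x i)
        + ((∑ i, Q.mulVec x i * s i) - ∑ i, Q.mulVec x i * x i)
        + lam * ((∑ i, s i * Real.log (s i)) - ∑ i, x i * Real.log (x i))
        = lam * (∑ i, (x i * Real.log (s i) - x i * Real.log (x i))) := by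
      have := sp1 ▸ e1
      rw [sp2] at this
      rw [sp3]
      linarith [this]
    have f4' : t * (((∑ i, c i * s i) - ∑ i, c i * x i)
        + ((∑ i, Q.mulVec x i * s i) - ∑ i, Q.mulVec x i * x i)
        + lam * ((∑ i, s i * Real.log (s i)) - ∑ i, x i * Real.log (x i)))
        = t * (lam * (∑ i, (x i * Real.log (s i) - x i * Real.log (x i)))) := by
      rw [f4]
    nlinarith [hmy, f1, f2, f3', f4', hquad]
  · -- fixed point ⇒ minimizer
    intro hxs y hy
    obtain ⟨hysum, hposy⟩ := hy
    have hxpos : ∀ i, 0 < x i := by intro i; rw [hxs]; exact hspos i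
    have hyx0 : ∑ i, (y i - x i) = 0 := by
      rw [Finset.sum_sub_distrib, hysum, hsum]; ring
    rw [obj_eq c Q lam x, obj_eq c Q lam y]
    -- quadratic lower bound
    have hqsub := qf_sub_nonneg Q hQ hQsym x y
    -- entropy lower bound
    have hent : ∑ i, (x i * Real.log (x i) + (y i - x i) * Real.log (x i) + (y i - x i))
        ≤ ∑ i, y i * Real.log (y i) := by
      apply Finset.sum_le_sum
      intro i _
      have h1 := ent_tangent (x i) (y i) (hxpos i) (hposy i)
      have h2 : (y i - x i) * Real.log (x i) = y i * Real.log (x i) - x i * Real.log (x i) := by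
        ring
      linarith
    have hentsplit : ∑ i, (x i * Real.log (x i) + (y i - x i) * Real.log (x i) + (y i - x i))
        = (∑ i, x i * Real.log (x i)) + (∑ i, (y i - x i) * Real.log (x i))
          + ∑ i, (y i - x i) := by
      simp only [Finset.sum_add_distrib]
    -- stationarity: the gradient is constant
    have hconst : ∀ i, c i + Q.mulVec x i + lam * Real.log (x i)
        = -lam * Real.log (∑ j, Real.exp (z j)) := by
      intro i
      have hlx : Real.log (x i) = Real.log (s i) := by rw [hxs]
      rw [hcQ i, hlx]
      ring
    have hzero : ∑ i, (c i + Q.mulVec x i + lam * Real.log (x i)) * (y i - x i) = 0 := by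
      rw [Finset.sum_congr rfl (fun i _ => by rw [hconst i])]
      rw [← Finset.mul_sum, hyx0, mul_zero]
    have hzsplit : ∑ i, (c i + Q.mulVec x i + lam * Real.log (x i)) * (y i - x i)
        = ((∑ i, c i * y i) - ∑ i, c i * x i)
          + ((∑ i, Q.mulVec x i * y i) - ∑ i, Q.mulVec x i * x i)
          + lam * ∑ i, (y i - x i) * Real.log (x i) := by
      rw [Finset.sum_congr rfl (fun i _ =>
        show (c i + Q.mulVec x i + lam * Real.log (x i)) * (y i - x i)
          = (c i * y i - c i * x i) + (Q.mulVec x i * y i - Q.mulVec x i * x i)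
            + lam * ((y i - x i) * Real.log (x i)) from by ring)]
      simp only [Finset.sum_add_distrib, Finset.sum_sub_distrib, ← Finset.mul_sum]
    rw [hzsplit] at hzero
    rw [hentsplit, hyx0] at hent
    have hent' := mul_le_mul_of_nonneg_left hent hlam.le
    linarith [hqsub, hzero, hent']
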